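/- Define u : ℂ → ℝ ∪ {−∞} by u(z) = Σ_{k=1}^∞ (1/k²)·log(|z − 1/k| + e^{−k³}) (the series converges at every point). Then for every integer k ≥ 1 one has u(1/k) ≤ −k + (π²/6)·log 2. Consequently, u is not bounded below on any neighborhood of 0, even though u(0) is a finite real number; that is, 0 belongs to the unbounded locus of u while u is finite at 0. -/

import Mathlib

open Real Filter

/-- The `k`-th term of Demailly's example: `(1/k²)·log(|z − 1/k| + e^{−k³})`. -/
noncomputable def demaillyTerm (k : ℕ) (z : ℂ) : ℝ :=
  (1 / (k : ℝ) ^ 2) * Real.log (‖z - 1 / (k : ℂ)‖ + Real.exp (-(k : ℝ) ^ 3))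

/-- Demailly's example `u(z) = ∑_{k=1}^∞ (1/k²)·log(|z − 1/k| + e^{−k³})`. -/
noncomputable def demaillyU (z : ℂ) : ℝ := ∑' k : ℕ, demaillyTerm (k + 1) z

lemma demailly_arg_pos (j : ℕ) (z : ℂ) :
    0 < ‖z - 1 / (j : ℂ)‖ + Real.exp (-(j : ℝ) ^ 3) := by
  have := Real.exp_pos (-(j : ℝ) ^ 3)
  have := norm_nonneg (z - 1 / (j : ℂ))
  linarith

lemma demailly_arg_le (j : ℕ) (hj : 1 ≤ j) (z : ℂ) :
    ‖z - 1 / (j : ℂ)‖ + Real.exp (-(j : ℝ) ^ 3) ≤ ‖z‖ + 2 := by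
  have hj1 : (1 : ℝ) ≤ (j : ℝ) := by exact_mod_cast hj
  have h1 : ‖z - 1 / (j : ℂ)‖ ≤ ‖z‖ + ‖1 / (j : ℂ)‖ :=
    norm_sub_le z (1 / (j : ℂ))
  have h2 : ‖1 / (j : ℂ)‖ = 1 / (j : ℝ) := by
    rw [norm_div, norm_one, Complex.norm_natCast]
  have h3 : 1 / (j : ℝ) ≤ 1 := by
    rw [div_le_one (by linarith)]; exact hj1
  have h4 : Real.exp (-(j : ℝ) ^ 3) ≤ 1 := by
    rw [Real.exp_le_one_iff, neg_nonpos]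
    positivity
  rw [h2] at h1
  linarith

lemma demailly_eventually_lower (z : ℂ) : ∀ᶠ j : ℕ in atTop,
    1 / (j : ℝ) ≤ ‖z - 1 / (j : ℂ)‖ + Real.exp (-(j : ℝ) ^ 3) := by
  rcases eq_or_ne z 0 with rfl | hz
  · filter_upwards [eventually_ge_atTop 1] with j hj
    have h : ‖0 - 1 / (j : ℂ)‖ = 1 / (j : ℝ) := by
      rw [zero_sub, norm_neg, norm_div, norm_one, Complex.norm_natCast]
    rw [h]
    have := Real.exp_pos (-(j : ℝ) ^ 3)
    linarith
  · have hz' : 0 < ‖z‖ := norm_pos_iff.mpr hz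
    obtain ⟨N, hN⟩ := exists_nat_gt (2 / ‖z‖)
    filter_upwards [eventually_ge_atTop (max N 1)] with j hj
    have hj1 : 1 ≤ j := le_trans (le_max_right N 1) hj
    have hjN : (2 / ‖z‖) < (j : ℝ) := by
      refine lt_of_lt_of_le hN ?_
      exact_mod_cast le_trans (le_max_left N 1) hj
    have hj0 : (0 : ℝ) < (j : ℝ) := by exact_mod_cast hj1
    have hja : 1 / (j : ℝ) ≤ ‖z‖ / 2 := by
      rw [div_le_div_iff₀ hj0 (by norm_num)]
      rw [div_lt_iff₀ hz'] at hjN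
      nlinarith
    have habs : ‖z‖ - 1 / (j : ℝ) ≤ ‖z - 1 / (j : ℂ)‖ := by
      have h2 : ‖1 / (j : ℂ)‖ = 1 / (j : ℝ) := by
        rw [norm_div, norm_one, Complex.norm_natCast]
      have := norm_sub_norm_le z (1 / (j : ℂ))
      rw [h2] at this
      linarith
    have := Real.exp_pos (-(j : ℝ) ^ 3)
    linarith


lemma demailly_term_norm_le (z : ℂ) (j : ℕ) (hj : 1 ≤ j)
    (hlow : 1 / (j : ℝ) ≤ ‖z - 1 / (j : ℂ)‖ + Real.exp (-(j : ℝ) ^ 3)) :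
    ‖demaillyTerm j z‖ ≤ (2 + Real.log (‖z‖ + 2)) * (1 / (j : ℝ) ^ ((3 : ℝ) / 2)) := by
  set a := ‖z - 1 / (j : ℂ)‖ + Real.exp (-(j : ℝ) ^ 3) with ha
  have hj1 : (1 : ℝ) ≤ (j : ℝ) := by exact_mod_cast hj
  have hj0 : (0 : ℝ) < (j : ℝ) := by linarith
  have hap : 0 < a := demailly_arg_pos j z
  set C := Real.log (‖z‖ + 2) with hC
  have hC0 : 0 ≤ C := Real.log_nonneg (by
    have := norm_nonneg z; linarith)
  have hup : Real.log a ≤ C := Real.log_le_log hap (demailly_arg_le j hj z)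
  have hdown : -Real.log (j : ℝ) ≤ Real.log a := by
    have := Real.log_le_log (by positivity : (0:ℝ) < 1 / (j:ℝ)) hlow
    rwa [Real.log_div one_ne_zero (ne_of_gt hj0), Real.log_one, zero_sub] at this
  have hlogj : 0 ≤ Real.log (j : ℝ) := Real.log_nonneg hj1
  have habs : |Real.log a| ≤ Real.log (j : ℝ) + C := by
    rw [abs_le]; constructor <;> linarith
  have hsq : Real.log (j : ℝ) ≤ 2 * Real.sqrt (j : ℝ) := by
    have h1 : Real.log (Real.sqrt (j : ℝ)) ≤ Real.sqrt (j : ℝ) - 1 :=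
      Real.log_le_sub_one_of_pos (Real.sqrt_pos.2 hj0)
    have h2 : Real.log (Real.sqrt (j : ℝ)) = Real.log (j : ℝ) / 2 :=
      Real.log_sqrt (le_of_lt hj0)
    have h3 : (0:ℝ) ≤ Real.sqrt (j : ℝ) := Real.sqrt_nonneg _
    linarith
  have hsq1 : (1 : ℝ) ≤ Real.sqrt (j : ℝ) := by
    rw [show (1:ℝ) = Real.sqrt 1 by simp]
    exact Real.sqrt_le_sqrt hj1
  have hkey : Real.sqrt (j : ℝ) / (j : ℝ) ^ 2 = 1 / (j : ℝ) ^ ((3 : ℝ) / 2) := by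
    rw [Real.sqrt_eq_rpow, div_eq_div_iff (by positivity) (by positivity), one_mul,
      ← Real.rpow_add hj0, ← Real.rpow_natCast (j:ℝ) 2]
    norm_num
  have hnorm : ‖demaillyTerm j z‖ = (1 / (j : ℝ) ^ 2) * |Real.log a| := by
    rw [demaillyTerm, Real.norm_eq_abs, abs_mul, abs_of_nonneg (by positivity : (0:ℝ) ≤ 1 / (j:ℝ)^2)]
  rw [hnorm]
  calc (1 / (j : ℝ) ^ 2) * |Real.log a| ≤ (1 / (j : ℝ) ^ 2) * ((2 + C) * Real.sqrt (j : ℝ)) := by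
        apply mul_le_mul_of_nonneg_left _ (by positivity)
        have : C ≤ C * Real.sqrt (j : ℝ) := le_mul_of_one_le_right hC0 hsq1
        calc |Real.log a| ≤ Real.log (j : ℝ) + C := habs
          _ ≤ 2 * Real.sqrt (j : ℝ) + C * Real.sqrt (j : ℝ) := by linarith
          _ = (2 + C) * Real.sqrt (j : ℝ) := by ring
    _ = (2 + C) * (Real.sqrt (j : ℝ) / (j : ℝ) ^ 2) := by ring
    _ = (2 + C) * (1 / (j : ℝ) ^ ((3 : ℝ) / 2)) := by rw [hkey]

lemma demailly_summable (z : ℂ) : Summable (fun k : ℕ => demaillyTerm (k + 1) z) := by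
  set C := Real.log (‖z‖ + 2) with hC
  have hg : Summable (fun k : ℕ => (2 + C) * (1 / ((k : ℝ) + 1) ^ ((3 : ℝ) / 2))) := by
    have h0 : Summable (fun n : ℕ => 1 / (n : ℝ) ^ ((3 : ℝ) / 2)) :=
      Real.summable_one_div_nat_rpow.2 (by norm_num)
    have h1 : Summable (fun n : ℕ => 1 / ((n + 1 : ℕ) : ℝ) ^ ((3 : ℝ) / 2)) :=
      (summable_nat_add_iff 1).2 h0
    exact ((h1.congr (fun n => by push_cast; ring)).mul_left _)
  apply Summable.of_norm_bounded_eventually_nat hg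
  have hev : ∀ᶠ k : ℕ in atTop,
      1 / ((k + 1 : ℕ) : ℝ) ≤ ‖z - 1 / ((k + 1 : ℕ) : ℂ)‖ +
        Real.exp (-((k + 1 : ℕ) : ℝ) ^ 3) :=
    (tendsto_add_atTop_nat 1).eventually (demailly_eventually_lower z)
  filter_upwards [hev] with k hk
  have := demailly_term_norm_le z (k + 1) (Nat.le_add_left 1 k) hk
  calc ‖demaillyTerm (k + 1) z‖ ≤ (2 + C) * (1 / ((k + 1 : ℕ) : ℝ) ^ ((3 : ℝ) / 2)) := this
    _ = (2 + C) * (1 / ((k : ℝ) + 1) ^ ((3 : ℝ) / 2)) := by push_cast; ring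


lemma basel_succ : HasSum (fun n : ℕ => 1 / ((n : ℝ) + 1) ^ 2) (Real.pi ^ 2 / 6) := by
  have h := hasSum_zeta_two
  rw [← hasSum_nat_add_iff' 1] at h
  simp only [Finset.range_one, Finset.sum_singleton, Nat.cast_zero] at h
  norm_num at h
  exact h.congr_fun (fun n => by push_cast; ring)

lemma demailly_term_le (j k : ℕ) (hj : 1 ≤ j) (hk : 1 ≤ k) :
    demaillyTerm j (1 / (k : ℂ)) ≤ 1 / (j : ℝ) ^ 2 * Real.log 2 := by
  have hj1 : (1 : ℝ) ≤ (j : ℝ) := by exact_mod_cast hj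
  have hk1 : (1 : ℝ) ≤ (k : ℝ) := by exact_mod_cast hk
  have hcast : (1 / (k : ℂ) - 1 / (j : ℂ)) = (((1 / (k : ℝ) - 1 / (j : ℝ)) : ℝ) : ℂ) := by
    push_cast; ring
  have habs : ‖1 / (k : ℂ) - 1 / (j : ℂ)‖ ≤ 1 := by
    rw [hcast, Complex.norm_real, Real.norm_eq_abs]
    have h1 : 0 < 1 / (k : ℝ) := by positivity
    have h2 : 0 < 1 / (j : ℝ) := by positivity
    have h3 : 1 / (k : ℝ) ≤ 1 := by rw [div_le_one (by linarith)]; exact hk1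
    have h4 : 1 / (j : ℝ) ≤ 1 := by rw [div_le_one (by linarith)]; exact hj1
    rw [abs_le]; constructor <;> linarith
  have hexp : Real.exp (-(j : ℝ) ^ 3) ≤ 1 := by
    rw [Real.exp_le_one_iff, neg_nonpos]; positivity
  have hle : ‖1 / (k : ℂ) - 1 / (j : ℂ)‖ + Real.exp (-(j : ℝ) ^ 3) ≤ 2 := by
    linarith
  have hlog : Real.log (‖1 / (k : ℂ) - 1 / (j : ℂ)‖ + Real.exp (-(j : ℝ) ^ 3))
      ≤ Real.log 2 := Real.log_le_log (demailly_arg_pos j _) hle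
  exact mul_le_mul_of_nonneg_left hlog (by positivity)

lemma demailly_bound (k : ℕ) (hk : 1 ≤ k) :
    demaillyU (1 / (k : ℂ)) ≤ -(k : ℝ) + (Real.pi ^ 2 / 6) * Real.log 2 := by
  set z := 1 / (k : ℂ) with hz
  have hf := demailly_summable z
  have hkey := hf.tsum_eq_add_tsum_ite (k - 1)
  rw [demaillyU, hkey]
  have hik : (k - 1) + 1 = k := Nat.succ_pred_eq_of_pos hk
  have hk0 : (k : ℝ) ≠ 0 := by
    have : (1:ℝ) ≤ (k:ℝ) := by exact_mod_cast hk
    linarith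
  have hterm : demaillyTerm ((k - 1) + 1) z = -(k : ℝ) := by
    rw [hik, demaillyTerm, hz, sub_self, norm_zero, zero_add, Real.log_exp]
    field_simp
  rw [hterm]
  apply add_le_add_right
  have hb : HasSum (fun n : ℕ => 1 / ((n : ℝ) + 1) ^ 2 * Real.log 2)
      (Real.pi ^ 2 / 6 * Real.log 2) := basel_succ.mul_right _
  have hlog2 : 0 ≤ Real.log 2 := Real.log_nonneg one_le_two
  have hsum_ite : Summable (fun n : ℕ => if n = k - 1 then 0 else demaillyTerm (n + 1) z) := by
    apply Summable.of_norm_bounded hf.abs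
    intro n
    by_cases h : n = k - 1 <;> simp [h, Real.norm_eq_abs]
  refine le_trans (Summable.tsum_le_tsum ?_ hsum_ite hb.summable) (le_of_eq hb.tsum_eq)
  intro n
  by_cases h : n = k - 1
  · simp only [h, if_pos]
    positivity
  · simp only [h, if_neg, if_false]
    have := demailly_term_le (n + 1) k (Nat.le_add_left 1 n) hk
    calc demaillyTerm (n + 1) z ≤ 1 / ((n + 1 : ℕ) : ℝ) ^ 2 * Real.log 2 := this
      _ = 1 / ((n : ℝ) + 1) ^ 2 * Real.log 2 := by push_cast; ring

/-- For `u(z) = ∑_{k=1}^∞ (1/k²)·log(|z − 1/k| + e^{−k³})` (the series converges at every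
point): for every integer `k ≥ 1` one has `u(1/k) ≤ −k + (π²/6)·log 2`.  Consequently `u`
is not bounded below on any neighborhood of `0` (so `0` lies in the unbounded locus of
`u`), even though the series at `0` is summable, i.e. `u(0)` is a finite real number. -/
theorem chern_stmt9 :
    (∀ k : ℕ, 1 ≤ k →
      demaillyU (1 / (k : ℂ)) ≤ -(k : ℝ) + (Real.pi ^ 2 / 6) * Real.log 2) ∧
    (∀ U ∈ nhds (0 : ℂ), ∀ m : ℝ, ∃ z ∈ U, demaillyU z < m) ∧
    Summable (fun k : ℕ => demaillyTerm (k + 1) 0) := by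
  refine ⟨demailly_bound, ?_, demailly_summable 0⟩
  intro U hU m
  rcases Metric.mem_nhds_iff.1 hU with ⟨ε, hε, hball⟩
  obtain ⟨n, hn⟩ := exists_nat_gt (max (1 / ε) (Real.pi ^ 2 / 6 * Real.log 2 - m))
  have hn0 : (0 : ℝ) < (n : ℝ) := by
    have h1 : 1 / ε ≤ max (1 / ε) (Real.pi ^ 2 / 6 * Real.log 2 - m) := le_max_left _ _
    have h2 : (0:ℝ) < 1 / ε := by positivity
    linarith
  have hn1 : 1 ≤ n := by exact_mod_cast Nat.one_le_iff_ne_zero.2 (by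
    intro h; rw [h] at hn0; norm_num at hn0)
  refine ⟨1 / (n : ℂ), hball ?_, ?_⟩
  · rw [Metric.mem_ball, dist_zero_right]
    have : ‖(1 : ℂ) / (n : ℂ)‖ = 1 / (n : ℝ) := by
      rw [norm_div, norm_one, Complex.norm_natCast]
    rw [this]
    have h1 : 1 / ε < (n : ℝ) := lt_of_le_of_lt (le_max_left _ _) hn
    rw [div_lt_iff₀ hn0]
    rw [div_lt_iff₀ hε] at h1
    nlinarith
  · have h2 : Real.pi ^ 2 / 6 * Real.log 2 - m < (n : ℝ) :=
      lt_of_le_of_lt (le_max_right _ _) hn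
    calc demaillyU (1 / (n : ℂ)) ≤ -(n : ℝ) + Real.pi ^ 2 / 6 * Real.log 2 :=
          demailly_bound n hn1
      _ < m := by linarith
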